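/- Let A₁, …, A_k and B₁, …, B_k be two families of pairwise disjoint subsets of [n], with ∪A_i and ∪B_i not necessarily covering [n]. Suppose each B_j intersects at most one A_i, each |A_i| > n/(2k), each B_j was chosen greedily as a largest admissible cluster, and ∑_i |A_i| > n − n/(2k). Then there exists a permutation π of [k] such that B_i ∩ A_{π(i)} ≠ ∅ and |B_i| ≥ |A_{π(i)}| for every i ∈ [k]. -/

import Mathlib

open Finset

/-- Claim (66): abstract greedy matching. If the cores `A i` are large, disjoint
and cover all but fewer than `n/(2k)` points, the clusters `B i` are disjoint,
each `B j` meets at most one core, and the greedy property holds (if a core is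
untouched by the first `i` clusters then `B i` is at least as large as it),
then some permutation `π` matches every `B i` to a core `A (π i)` it intersects,
with `|B i| ≥ |A (π i)|`. -/
theorem stmt_11 (n k : ℕ) (hk : 0 < k) (A B : Fin k → Finset (Fin n))
    (hA : ∀ i j, i ≠ j → Disjoint (A i) (A j))
    (hB : ∀ i j, i ≠ j → Disjoint (B i) (B j))
    (hone : ∀ j i i', (B j ∩ A i).Nonempty → (B j ∩ A i').Nonempty → i = i')
    (hbig : ∀ i, (n : ℝ) / (2 * k) < (A i).card)
    (hgreedy : ∀ i j : Fin k, (∀ i' : Fin k, i' < i → Disjoint (A j) (B i')) →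
      (A j).card ≤ (B i).card)
    (hcover : (n : ℝ) - (n : ℝ) / (2 * k) < ∑ i, ((A i).card : ℝ)) :
    ∃ π : Equiv.Perm (Fin k), ∀ i,
      (B i ∩ A (π i)).Nonempty ∧ (A (π i)).card ≤ (B i).card := by
  classical
  -- `F m` : the set of clusters touching core `m`
  set F : Fin k → Finset (Fin k) :=
    fun m => univ.filter (fun i => (B i ∩ A m).Nonempty) with hF
  have hFd : ∀ m, ¬ (F m).Nonempty → ∀ i, Disjoint (A m) (B i) := by
    intro m hm i
    rw [not_nonempty_iff_eq_empty, hF, filter_eq_empty_iff] at hm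
    have := hm (mem_univ i)
    rw [not_nonempty_iff_eq_empty] at this
    exact (disjoint_iff_inter_eq_empty.mpr this).symm
  -- `g m` : the first cluster touching core `m` (junk value if none)
  set g : Fin k → Fin k :=
    fun m => if h : (F m).Nonempty then (F m).min' h else ⟨0, hk⟩ with hg
  have hg1 : ∀ m, (F m).Nonempty → (B (g m) ∩ A m).Nonempty := by
    intro m h
    have hmem := (F m).min'_mem h
    simp only [hg, dif_pos h]
    exact (mem_filter.mp hmem).2
  have hg2 : ∀ m, (F m).Nonempty → ∀ i', i' < g m → Disjoint (A m) (B i') := by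
    intro m h i' hi'
    simp only [hg, dif_pos h] at hi'
    have hni : i' ∉ F m := fun hmem => absurd ((F m).min'_le i' hmem) (not_le.mpr hi')
    rw [hF, mem_filter, not_and] at hni
    have hempty : ¬ (B i' ∩ A m).Nonempty := hni (mem_univ i')
    rw [not_nonempty_iff_eq_empty] at hempty
    exact (disjoint_iff_inter_eq_empty.mpr hempty).symm
  have hgcard : ∀ m, (F m).Nonempty → (A m).card ≤ (B (g m)).card := by
    intro m h
    exact hgreedy (g m) m (fun i' hi' => hg2 m h i' hi')
  have hginj : ∀ m m', (F m).Nonempty → (F m').Nonempty → g m = g m' → m = m' := by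
    intro m m' h h' he
    refine hone (g m) m m' (hg1 m h) ?_
    rw [he]; exact hg1 m' h'
  -- every core is touched by some cluster
  have hall : ∀ m : Fin k, (F m).Nonempty := by
    by_contra hcon
    push_neg at hcon
    obtain ⟨j, hj⟩ := hcon
    rw [← not_nonempty_iff_eq_empty] at hj
    have hjd : ∀ i, Disjoint (A j) (B i) := hFd j hj
    -- the touched cores
    set T : Finset (Fin k) := univ.filter (fun m => (F m).Nonempty) with hT
    have hmemT : ∀ m, m ∈ T ↔ (F m).Nonempty := by
      intro m; rw [hT, mem_filter]; simp
    have hjT : j ∉ T := fun h => hj ((hmemT j).mp h)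
    set S₁ : Finset (Fin k) := T.image g with hS₁
    have hinjT : Set.InjOn g T := by
      intro a ha b hb hab
      exact hginj a b ((hmemT a).mp ha) ((hmemT b).mp hb) hab
    -- the first-toucher clusters are at least as big as their cores
    have h3 : ∑ m ∈ T, (A m).card ≤ ∑ i ∈ S₁, (B i).card := by
      rw [hS₁, sum_image hinjT]
      exact sum_le_sum (fun m hm => hgcard m ((hmemT m).mp hm))
    -- some cluster is not a first-toucher
    have hS₁card : S₁.card < k := by
      rw [hS₁, card_image_of_injOn hinjT]
      calc T.card < univ.card := card_lt_card ⟨subset_univ T, fun h => hjT (h (mem_univ j))⟩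
        _ = k := by simp
    have hS₁c : S₁ᶜ.Nonempty := by
      rw [← card_pos, card_compl]
      simp only [Fintype.card_fin]
      omega
    obtain ⟨i₀, hi₀⟩ := hS₁c
    have h4 : (A j).card ≤ ∑ i ∈ S₁ᶜ, (B i).card :=
      le_trans (hgreedy i₀ j (fun i' _ => hjd i'))
        (single_le_sum (f := fun i => (B i).card) (fun i _ => Nat.zero_le _) hi₀)
    have h5 : ∑ i ∈ S₁, (B i).card + ∑ i ∈ S₁ᶜ, (B i).card = ∑ i, (B i).card :=
      sum_add_sum_compl S₁ _
    -- all clusters together with the untouched cores are pairwise disjoint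
    have h6 : ∑ i, (B i).card + ∑ m ∈ Tᶜ, (A m).card ≤ n := by
      have hD : (univ.biUnion B).card = ∑ i, (B i).card :=
        card_biUnion (fun i _ j _ hij => hB i j hij)
      have hAinj : ∀ a ∈ Tᶜ, ∀ b ∈ Tᶜ, a ≠ b → Disjoint (A a) (A b) :=
        fun a _ b _ hab => hA a b hab
      have hE : (Tᶜ.biUnion A).card = ∑ m ∈ Tᶜ, (A m).card := card_biUnion hAinj
      have hdisj : Disjoint (univ.biUnion B) (Tᶜ.biUnion A) := by
        rw [disjoint_biUnion_left]
        intro i _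
        rw [disjoint_biUnion_right]
        intro m hm
        have : ¬ (F m).Nonempty := by
          intro h
          exact (mem_compl.mp hm) ((hmemT m).mpr h)
        exact (hFd m this i).symm
      calc ∑ i, (B i).card + ∑ m ∈ Tᶜ, (A m).card
          = (univ.biUnion B ∪ Tᶜ.biUnion A).card := by
            rw [card_union_of_disjoint hdisj, hD, hE]
        _ ≤ Fintype.card (Fin n) := card_le_univ _
        _ = n := Fintype.card_fin n
    have h7 : ∑ m ∈ T, (A m).card + ∑ m ∈ Tᶜ, (A m).card = ∑ m, (A m).card :=
      sum_add_sum_compl T _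
    have hnat : ∑ m, (A m).card + (A j).card ≤ n := by omega
    -- cast to reals and contradict `hcover`
    have hcast : (∑ m, ((A m).card : ℝ)) + ((A j).card : ℝ) ≤ (n : ℝ) := by
      have := (Nat.cast_le (α := ℝ)).mpr hnat
      push_cast at this
      linarith
    have := hbig j
    linarith
  -- build the permutation
  have hbij : Function.Bijective g :=
    Finite.injective_iff_bijective.mp
      (fun m m' he => hginj m m' (hall m) (hall m') he)
  set e : Fin k ≃ Fin k := Equiv.ofBijective g hbij with he
  refine ⟨e.symm, fun i => ?_⟩
  have hgi : g (e.symm i) = i := by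
    have := e.apply_symm_apply i
    rwa [he, Equiv.ofBijective_apply] at this
  constructor
  · have := hg1 (e.symm i) (hall _)
    rwa [hgi] at this
  · have := hgcard (e.symm i) (hall _)
    rwa [hgi] at this
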